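/- Let q be a prime power and V, W finite-dimensional F_q-vector spaces. For f : L(V,W) → ℂ, the junta-degree of f (the minimal d such that f is a sum of functions each depending only on the values Av₁,...,Av_i, A*u_{i+1},...,A*u_d for some fixed vectors v_j ∈ V and functionals u_j ∈ W*) equals the Fourier-degree of f, defined as max{rank(X) : f̂(X) ≠ 0}. -/

import Mathlib

open LinearMap Module

noncomputable def ee (p : ℕ) (a : ZMod p) : ℂ :=
  Complex.exp (2 * (Real.pi : ℂ) * Complex.I * (a.val : ℂ) / (p : ℂ))

/-- The character `u_X(A) = ω^{τ(Tr(XA))}` on `L(V,W)`. -/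
noncomputable def uX (p s : ℕ) [Fact p.Prime] {V W : Type*}
    [AddCommGroup V] [Module (GaloisField p s) V]
    [AddCommGroup W] [Module (GaloisField p s) W]
    (X : W →ₗ[GaloisField p s] V) (A : V →ₗ[GaloisField p s] W) : ℂ :=
  ee p (Algebra.trace (ZMod p) (GaloisField p s)
    (LinearMap.trace (GaloisField p s) V (X ∘ₗ A)))

/-- Fourier coefficient of `f : L(V,W) → ℂ` at `X ∈ L(W,V)` (uniform measure). -/
noncomputable def fhatB (p s : ℕ) [Fact p.Prime] {V W : Type*}
    [AddCommGroup V] [Module (GaloisField p s) V]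
    [AddCommGroup W] [Module (GaloisField p s) W]
    (f : (V →ₗ[GaloisField p s] W) → ℂ) (X : W →ₗ[GaloisField p s] V) : ℂ :=
  (∑ᶠ A : V →ₗ[GaloisField p s] W, f A * (starRingEnd ℂ) (uX p s X A)) /
    (Nat.card (V →ₗ[GaloisField p s] W) : ℂ)

section EE

variable {p : ℕ} [Fact p.Prime]

lemma ee_eq_std (a : ZMod p) : ee p a = ZMod.stdAddChar a := by
  rw [ee, ZMod.stdAddChar_apply, ZMod.toCircle_apply]

lemma ee_add (a b : ZMod p) : ee p (a + b) = ee p a * ee p b := by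
  simp only [ee_eq_std]; exact AddChar.map_add_eq_mul _ a b

lemma ee_zero : ee p (0 : ZMod p) = 1 := by
  simp only [ee_eq_std]; exact AddChar.map_zero_eq_one _

lemma ee_eq_one_iff (a : ZMod p) : ee p a = 1 ↔ a = 0 := by
  rw [ee_eq_std, ZMod.stdAddChar_apply]
  constructor
  · intro h
    apply ZMod.injective_toCircle
    apply Subtype.coe_injective
    simpa only [AddChar.map_zero_eq_one, OneMemClass.coe_one, Circle.coe_one] using h
  · rintro rfl; simp

lemma conj_ee_mul_self (a : ZMod p) : (starRingEnd ℂ) (ee p a) * ee p a = 1 := by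
  rw [ee, ← Complex.exp_conj, ← Complex.exp_add]
  have h : (starRingEnd ℂ) (2 * (Real.pi : ℂ) * Complex.I * (a.val : ℂ) / (p : ℂ))
      = -(2 * (Real.pi : ℂ) * Complex.I * (a.val : ℂ) / (p : ℂ)) := by
    simp only [map_div₀, map_mul, Complex.conj_I, Complex.conj_ofReal, map_natCast,
      map_ofNat, mul_neg, neg_mul, neg_div]
  rw [h, neg_add_cancel, Complex.exp_zero]

end EE

section Fourier

variable (p s : ℕ) [Fact p.Prime] {V W : Type*}
    [AddCommGroup V] [Module (GaloisField p s) V] [Finite V]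
    [AddCommGroup W] [Module (GaloisField p s) W] [Finite W]

local notation "𝔽" => GaloisField p s
local notation "τ" => Algebra.trace (ZMod p) (GaloisField p s)

instance : Module.Finite 𝔽 V := Module.Finite.of_finite
instance : Module.Finite 𝔽 W := Module.Finite.of_finite
instance : Finite (V →ₗ[𝔽] W) := Finite.of_injective _ LinearMap.coe_injective

omit [Finite V] [Finite W] in
/-- If `φ : G →+ ZMod p` is a nonzero additive hom on a finite group, the character sum is 0. -/
lemma sum_ee_eq_zero {G : Type*} [AddCommGroup G] [Fintype G] (φ : G →+ ZMod p)
    (h : ∃ x, φ x ≠ 0) : ∑ x, ee p (φ x) = 0 := by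
  have h2 : ∑ x, ee p (φ x) = ∑ x, (ZMod.stdAddChar.compAddMonoidHom φ) x := by
    refine Finset.sum_congr rfl fun x _ => ?_
    rw [ee_eq_std]; rfl
  rw [h2]
  apply AddChar.sum_eq_zero_of_ne_one
  obtain ⟨x, hx⟩ := h
  rw [AddChar.ne_one_iff]
  refine ⟨x, ?_⟩
  show ZMod.stdAddChar (φ x) ≠ 1
  rw [← ee_eq_std, Ne, ee_eq_one_iff]
  exact hx

omit [Finite V] [Finite W] in
lemma uX_add (X : W →ₗ[𝔽] V) (A B : V →ₗ[𝔽] W) :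
    uX p s X (A + B) = uX p s X A * uX p s X B := by
  rw [uX, uX, uX, ← ee_add, comp_add, map_add, map_add]

omit [Finite V] [Finite W] in
lemma uX_zero (X : W →ₗ[𝔽] V) : uX p s X 0 = 1 := by
  rw [uX, comp_zero, map_zero, map_zero, ee_zero]

/-- Nondegeneracy of the scalar trace: some element has nonzero trace. -/
lemma exists_tau_ne_zero : ∃ c : 𝔽, τ c ≠ 0 := by
  have hnd := traceForm_nondegenerate (ZMod p) 𝔽
  by_contra h
  push_neg at h
  have h1 := hnd.1 1 (fun y => by simpa [Algebra.traceForm_apply] using h y)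
  exact one_ne_zero h1

/-- Nondegeneracy: `τ (λ * c) = 0` for all `λ` implies `c = 0`. -/
lemma tau_nondeg (c : 𝔽) (h : ∀ lam : 𝔽, τ (lam * c) = 0) : c = 0 := by
  have hnd := traceForm_nondegenerate (ZMod p) 𝔽
  exact hnd.1 c (fun y => by simpa [Algebra.traceForm_apply, mul_comm] using h y)

omit [Finite W] in
lemma trace_smulRight' (ψ : V →ₗ[𝔽] 𝔽) (x : V) :
    LinearMap.trace 𝔽 V (ψ.smulRight x) = ψ x := by
  have h : ψ.smulRight x = dualTensorHom 𝔽 V V (ψ ⊗ₜ x) := by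
    ext v; simp [dualTensorHom_apply]
  rw [h, trace_eq_contract_apply, contractLeft_apply]

/-- For nonzero `C : V →ₗ W` there is `X` with `τ (Tr (X ∘ C)) ≠ 0`. -/
lemma exists_dual_pair (C : V →ₗ[𝔽] W) (hC : C ≠ 0) :
    ∃ X : W →ₗ[𝔽] V, τ (LinearMap.trace 𝔽 V (X ∘ₗ C)) ≠ 0 := by
  obtain ⟨v, hv⟩ : ∃ v, C v ≠ 0 := by
    by_contra h; push_neg at h; exact hC (LinearMap.ext h)
  obtain ⟨φ, hφ⟩ : ∃ φ : W →ₗ[𝔽] 𝔽, φ (C v) ≠ 0 := by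
    by_contra h; push_neg at h
    exact hv ((Module.forall_dual_apply_eq_zero_iff 𝔽 (C v)).1 h)
  obtain ⟨c, hc⟩ := exists_tau_ne_zero p s
  refine ⟨((c * (φ (C v))⁻¹) • φ).smulRight v, ?_⟩
  have h1 : (((c * (φ (C v))⁻¹) • φ).smulRight v) ∘ₗ C
      = (((c * (φ (C v))⁻¹) • φ) ∘ₗ C).smulRight v := by
    ext u; simp
  rw [h1, trace_smulRight']
  have h2 : (((c * (φ (C v))⁻¹) • φ) ∘ₗ C) v = c := by
    simp [mul_assoc, inv_mul_cancel₀ hφ]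
  rw [h2]
  exact hc

/-- Orthogonality: for `C ≠ 0`, `∑_X uX X C = 0`. -/
lemma sum_uX_eq_zero [Fintype (W →ₗ[𝔽] V)] (C : V →ₗ[𝔽] W) (hC : C ≠ 0) :
    ∑ X : W →ₗ[𝔽] V, uX p s X C = 0 := by
  classical
  let φ : (W →ₗ[𝔽] V) →+ ZMod p :=
    AddMonoidHom.mk' (fun X => τ (LinearMap.trace 𝔽 V (X ∘ₗ C)))
      (fun a b => by
        show τ (LinearMap.trace 𝔽 V ((a + b) ∘ₗ C)) = _
        rw [LinearMap.add_comp, map_add, map_add])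
  have h : ∀ X : W →ₗ[𝔽] V, uX p s X C = ee p (φ X) := fun X => rfl
  simp_rw [h]
  exact sum_ee_eq_zero p φ (exists_dual_pair p s C hC)

lemma card_hom_eq : Nat.card (V →ₗ[𝔽] W) = Nat.card (W →ₗ[𝔽] V) := by
  let bV := Module.finBasis 𝔽 V
  let bW := Module.finBasis 𝔽 W
  rw [Nat.card_congr (LinearMap.toMatrix bV bW).toEquiv,
    Nat.card_congr (LinearMap.toMatrix bW bV).toEquiv]
  exact Nat.card_congr (Matrix.transposeAddEquiv _ _ 𝔽).toEquiv

/-- Fourier inversion. -/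
lemma inversion [Fintype (V →ₗ[𝔽] W)] [Fintype (W →ₗ[𝔽] V)] (f : (V →ₗ[𝔽] W) → ℂ)
    (A : V →ₗ[𝔽] W) :
    f A = ∑ X : W →ₗ[𝔽] V, fhatB p s f X * uX p s X A := by
  classical
  have hM : (Nat.card (V →ₗ[𝔽] W) : ℂ) ≠ 0 := Nat.cast_ne_zero.2 Nat.card_pos.ne'
  have inner : ∀ B : V →ₗ[𝔽] W, ∑ X : W →ₗ[𝔽] V,
      (starRingEnd ℂ) (uX p s X B) * uX p s X A
      = if A = B then (Nat.card (W →ₗ[𝔽] V) : ℂ) else 0 := by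
    intro B
    have h : ∀ X : W →ₗ[𝔽] V, (starRingEnd ℂ) (uX p s X B) * uX p s X A
        = uX p s X (A - B) := by
      intro X
      have h1 : uX p s X A = uX p s X B * uX p s X (A - B) := by
        rw [← uX_add]; congr 1; abel
      rw [h1, ← mul_assoc, uX, conj_ee_mul_self, one_mul, uX]
    simp_rw [h]
    by_cases hAB : A = B
    · subst hAB
      simp [sub_self, uX_zero, Nat.card_eq_fintype_card, Finset.card_univ]
    · rw [if_neg hAB]
      exact sum_uX_eq_zero p s _ (sub_ne_zero.2 fun hh => hAB hh)
  have hstep : ∑ X : W →ₗ[𝔽] V, fhatB p s f X * uX p s X A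
      = (∑ B : V →ₗ[𝔽] W, f B * ∑ X : W →ₗ[𝔽] V,
          (starRingEnd ℂ) (uX p s X B) * uX p s X A) / (Nat.card (V →ₗ[𝔽] W) : ℂ) := by
    unfold fhatB
    simp_rw [finsum_eq_sum_of_fintype, div_mul_eq_mul_div, ← Finset.sum_div, Finset.sum_mul,
      Finset.mul_sum]
    congr 1
    rw [Finset.sum_comm]
    refine Finset.sum_congr rfl fun B _ => Finset.sum_congr rfl fun X _ => by ring
  rw [hstep]
  simp_rw [inner]
  have hMN : (Nat.card (W →ₗ[𝔽] V) : ℂ) = (Nat.card (V →ₗ[𝔽] W) : ℂ) := by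
    exact congrArg (Nat.cast : ℕ → ℂ) (card_hom_eq p s (V := V) (W := W)).symm
  simp_rw [mul_ite, mul_zero]
  rw [Finset.sum_ite_eq Finset.univ A, if_pos (Finset.mem_univ A), hMN, mul_div_assoc,
    div_self hM, mul_one]

omit [Finite V] [Finite W] in
lemma codim_iInf_ker [FiniteDimensional 𝔽 W] {n : ℕ} (uu : Fin n → (W →ₗ[𝔽] 𝔽)) :
    finrank 𝔽 W ≤ finrank 𝔽 (⨅ l, ker (uu l) : Submodule 𝔽 W) + n := by
  induction n with
  | zero =>
    have h0 : (⨅ l : Fin 0, ker (uu l) : Submodule 𝔽 W) = ⊤ := by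
      simp
    rw [h0]
    simp [finrank_top]
  | succ n ih =>
    have hsplit : (⨅ l, ker (uu l) : Submodule 𝔽 W)
        = (⨅ l : Fin n, ker (uu l.castSucc)) ⊓ ker (uu (Fin.last n)) := by
      apply le_antisymm
      · exact le_inf (le_iInf fun l => iInf_le _ _) (iInf_le _ _)
      · refine le_iInf fun l => ?_
        rcases Fin.eq_castSucc_or_eq_last l with ⟨l', rfl⟩ | rfl
        · exact inf_le_left.trans (iInf_le _ _)
        · exact inf_le_right
    set q := (⨅ l : Fin n, ker (uu l.castSucc) : Submodule 𝔽 W) with hq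
    have h2 : finrank 𝔽 q ≤ finrank 𝔽 (q ⊓ ker (uu (Fin.last n)) : Submodule 𝔽 W) + 1 := by
      have hr := LinearMap.finrank_range_add_finrank_ker ((uu (Fin.last n)).domRestrict q)
      have hker : finrank 𝔽 (ker ((uu (Fin.last n)).domRestrict q))
          = finrank 𝔽 (q ⊓ ker (uu (Fin.last n)) : Submodule 𝔽 W) := by
        rw [LinearMap.ker_domRestrict, ← Submodule.finrank_map_subtype_eq q,
          Submodule.map_comap_subtype]
      have hrange : finrank 𝔽 (range ((uu (Fin.last n)).domRestrict q)) ≤ 1 := by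
        have := Submodule.finrank_le (range ((uu (Fin.last n)).domRestrict q))
        rwa [finrank_self] at this
      omega
    have hih := ih (fun l => uu l.castSucc)
    rw [← hq] at hih
    rw [hsplit]
    omega

omit [Finite V] [Finite W] in
lemma rank_le_of_maps_into [FiniteDimensional 𝔽 V] [FiniteDimensional 𝔽 W]
    (X : W →ₗ[𝔽] V) (W₀ : Submodule 𝔽 W) (V₀ : Submodule 𝔽 V)
    (h : ∀ w ∈ W₀, X w ∈ V₀) :
    finrank 𝔽 (LinearMap.range X) ≤ finrank 𝔽 V₀ + (finrank 𝔽 W - finrank 𝔽 W₀) := by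
  obtain ⟨W₁, hW₁⟩ := Submodule.exists_isCompl W₀
  have hcard : finrank 𝔽 W₀ + finrank 𝔽 W₁ = finrank 𝔽 W :=
    Submodule.finrank_add_eq_of_isCompl hW₁
  have h1 : LinearMap.range X = Submodule.map X W₀ ⊔ Submodule.map X W₁ := by
    rw [← Submodule.map_sup, hW₁.sup_eq_top, Submodule.map_top]
  have h3 : Submodule.map X W₀ ≤ V₀ := by
    rintro _ ⟨w, hw, rfl⟩
    exact h w hw
  have h4 : finrank 𝔽 (LinearMap.range X) ≤ finrank 𝔽 (V₀ ⊔ Submodule.map X W₁ : Submodule 𝔽 V) :=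
    h1 ▸ Submodule.finrank_mono (sup_le_sup h3 le_rfl)
  have h5 := Submodule.finrank_sup_add_finrank_inf_eq V₀ (Submodule.map X W₁)
  have h6 : finrank 𝔽 (Submodule.map X W₁) ≤ finrank 𝔽 W₁ := Submodule.finrank_map_le X W₁
  omega

omit [Finite V] [Finite W] in
lemma span_range_basis_eq {p' : Submodule 𝔽 V} {ι : Type*} (b : Basis ι 𝔽 p') :
    Submodule.span 𝔽 (Set.range fun l => ((b l : V))) = p' := by
  have h : (Set.range fun l => ((b l : V))) = p'.subtype '' Set.range b := by
    rw [← Set.range_comp]; rfl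
  rw [h, Submodule.span_image, b.span_eq, Submodule.map_top, Submodule.range_subtype]

/-- The heart of the forward direction: Fourier support of a junta is low-rank. -/
lemma junta_support (d i : ℕ) (hi : i ≤ d) (vv : Fin i → V) (uu : Fin (d - i) → (W →ₗ[𝔽] 𝔽))
    (g : (V →ₗ[𝔽] W) → ℂ)
    (hg : ∀ A B : V →ₗ[𝔽] W, (∀ l, A (vv l) = B (vv l)) → (∀ l, uu l ∘ₗ A = uu l ∘ₗ B) →
      g A = g B)
    (X : W →ₗ[𝔽] V) (hX : fhatB p s g X ≠ 0) :
    finrank 𝔽 (LinearMap.range X) ≤ d := by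
  classical
  haveI : Fintype (V →ₗ[𝔽] W) := Fintype.ofFinite _
  set T := ∑ A : V →ₗ[𝔽] W, g A * (starRingEnd ℂ) (uX p s X A) with hT
  have hTne : T ≠ 0 := by
    intro h0
    apply hX
    rw [fhatB, finsum_eq_sum_of_fintype, ← hT, h0, zero_div]
  -- the space of perturbations
  let S : Submodule 𝔽 (V →ₗ[𝔽] W) :=
    { carrier := {Δ | (∀ l, Δ (vv l) = 0) ∧ ∀ l, uu l ∘ₗ Δ = 0}
      add_mem' := fun ha hb => ⟨fun l => by simp [ha.1 l, hb.1 l],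
        fun l => by rw [comp_add, ha.2 l, hb.2 l, add_zero]⟩
      zero_mem' := ⟨fun l => rfl, fun l => comp_zero _⟩
      smul_mem' := fun c x hx => ⟨fun l => by simp [hx.1 l],
        fun l => by rw [comp_smul, hx.2 l, smul_zero]⟩ }
  have hmem : ∀ Δ : V →ₗ[𝔽] W, Δ ∈ S ↔ (∀ l, Δ (vv l) = 0) ∧ ∀ l, uu l ∘ₗ Δ = 0 :=
    fun Δ => Iff.rfl
  -- step 1 : characters are trivial on S
  have step1 : ∀ Δ ∈ S, uX p s X Δ = 1 := by
    intro Δ hΔ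
    have hg' : ∀ A : V →ₗ[𝔽] W, g (A + Δ) = g A := fun A =>
      hg _ _ (fun l => by simp [(hmem Δ).1 hΔ |>.1 l])
        (fun l => by rw [comp_add, (hmem Δ).1 hΔ |>.2 l, add_zero])
    have hre : T * (starRingEnd ℂ) (uX p s X Δ) = T * 1 := by
      rw [mul_one, hT]
      rw [Finset.sum_mul]
      calc ∑ A : V →ₗ[𝔽] W, g A * (starRingEnd ℂ) (uX p s X A) * (starRingEnd ℂ) (uX p s X Δ)
          = ∑ A : V →ₗ[𝔽] W, g (A + Δ) * (starRingEnd ℂ) (uX p s X (A + Δ)) := by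
            refine Finset.sum_congr rfl fun A _ => ?_
            rw [hg', uX_add, map_mul, mul_assoc]
        _ = ∑ A : V →ₗ[𝔽] W, g A * (starRingEnd ℂ) (uX p s X A) :=
            Fintype.sum_equiv (Equiv.addRight Δ) _ _ (fun A => rfl)
    have hconj : (starRingEnd ℂ) (uX p s X Δ) = 1 := mul_left_cancel₀ hTne hre
    have := congrArg (starRingEnd ℂ) hconj
    rwa [Complex.conj_conj, map_one] at this
  -- step 2/3 : trace vanishes on S
  have step3 : ∀ Δ ∈ S, LinearMap.trace 𝔽 V (X ∘ₗ Δ) = 0 := by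
    intro Δ hΔ
    apply tau_nondeg p s
    intro lam
    have hmem2 : lam • Δ ∈ S := S.smul_mem lam hΔ
    have h1 := (ee_eq_one_iff _).1 (step1 _ hmem2)
    rwa [comp_smul, map_smul, smul_eq_mul] at h1
  -- step 4 : X maps W₀ into V₀
  set W₀ := (⨅ l, ker (uu l) : Submodule 𝔽 W) with hW₀
  set V₀ := Submodule.span 𝔽 (Set.range vv) with hV₀
  have step4 : ∀ w ∈ W₀, X w ∈ V₀ := by
    intro w hw
    by_contra hnot
    have hq : V₀.mkQ (X w) ≠ 0 := by
      simpa [Submodule.Quotient.mk_eq_zero] using hnot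
    obtain ⟨φ, hφ⟩ : ∃ φ : Module.Dual 𝔽 (V ⧸ V₀), φ (V₀.mkQ (X w)) ≠ 0 := by
      by_contra hcon; push_neg at hcon
      exact hq ((Module.forall_dual_apply_eq_zero_iff 𝔽 _).1 hcon)
    set ψ : V →ₗ[𝔽] 𝔽 := φ ∘ₗ V₀.mkQ with hψ
    have hΔS : ψ.smulRight w ∈ S := by
      refine (hmem _).2 ⟨fun l => ?_, fun l => ?_⟩
      · have : ψ (vv l) = 0 := by
          rw [hψ, comp_apply]
          rw [show V₀.mkQ (vv l) = 0 from
            (Submodule.Quotient.mk_eq_zero V₀).2 (Submodule.subset_span ⟨l, rfl⟩)]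
          exact map_zero φ
        simp [this]
      · ext v
        have hwker : uu l w = 0 := by
          have := (Submodule.mem_iInf _).1 hw l
          simpa [LinearMap.mem_ker] using this
        simp [hwker]
    have htr := step3 _ hΔS
    have hXc : X ∘ₗ (ψ.smulRight w) = ψ.smulRight (X w) := by
      ext v; simp
    rw [hXc, trace_smulRight' p s] at htr
    exact hφ htr
  have hbound := rank_le_of_maps_into p s X W₀ V₀ step4
  have hcodim := codim_iInf_ker p s (uu := uu)
  rw [← hW₀] at hcodim
  have hV₀rank : finrank 𝔽 V₀ ≤ i := by
    have := finrank_range_le_card (R := 𝔽) vv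
    rw [Set.finrank] at this
    simpa using this
  omega

end Fourier

/-- the junta-degree of `f : L(V,W) → ℂ` equals its Fourier-degree. -/
theorem stmt9 (p s : ℕ) [Fact p.Prime] (hs : s ≠ 0)
    (V W : Type) [AddCommGroup V] [Module (GaloisField p s) V] [Finite V]
    [AddCommGroup W] [Module (GaloisField p s) W] [Finite W]
    (f : (V →ₗ[GaloisField p s] W) → ℂ) (d : ℕ) :
    (∃ (k : ℕ) (g : Fin k → ((V →ₗ[GaloisField p s] W) → ℂ)),
      (∀ j, ∃ (i : ℕ) (_ : i ≤ d) (vv : Fin i → V)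
          (uu : Fin (d - i) → (W →ₗ[GaloisField p s] (GaloisField p s))),
        ∀ A B : V →ₗ[GaloisField p s] W,
          (∀ l, A (vv l) = B (vv l)) → (∀ l, uu l ∘ₗ A = uu l ∘ₗ B) → g j A = g j B) ∧
      f = fun A => ∑ j, g j A)
    ↔ (∀ X : W →ₗ[GaloisField p s] V, fhatB p s f X ≠ 0 →
        Module.finrank (GaloisField p s) (LinearMap.range X) ≤ d) := by
  classical
  haveI : Fintype (V →ₗ[GaloisField p s] W) := Fintype.ofFinite _
  haveI : Finite (W →ₗ[GaloisField p s] V) := Finite.of_injective _ LinearMap.coe_injective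
  haveI : Fintype (W →ₗ[GaloisField p s] V) := Fintype.ofFinite _
  constructor
  · rintro ⟨k, g, hj, hf⟩ X hX
    have hadd : fhatB p s f X = ∑ j, fhatB p s (g j) X := by
      rw [hf]
      unfold fhatB
      simp_rw [finsum_eq_sum_of_fintype, ← Finset.sum_div]
      congr 1
      simp_rw [Finset.sum_mul]
      rw [Finset.sum_comm]
    rw [hadd] at hX
    obtain ⟨j, -, hj0⟩ := Finset.exists_ne_zero_of_sum_ne_zero hX
    obtain ⟨i, hi, vv, uu, hinv⟩ := hj j
    exact junta_support p s d i hi vv uu (g j) hinv X hj0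
  · intro h
    let e : Fin (Fintype.card (W →ₗ[GaloisField p s] V)) ≃ (W →ₗ[GaloisField p s] V) :=
      (Fintype.equivFin _).symm
    refine ⟨Fintype.card (W →ₗ[GaloisField p s] V),
      fun j A => fhatB p s f (e j) * uX p s (e j) A, fun j => ?_, ?_⟩
    · by_cases h0 : fhatB p s f (e j) = 0
      · exact ⟨0, Nat.zero_le d, Fin.elim0, fun _ => 0, fun A B _ _ => by simp [h0]⟩
      · have hrk : finrank (GaloisField p s) (LinearMap.range (e j)) ≤ d := h (e j) h0
        let b := Module.finBasis (GaloisField p s) (LinearMap.range (e j))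
        refine ⟨finrank (GaloisField p s) (LinearMap.range (e j)), hrk,
          fun l => (b l : V), fun _ => 0, ?_⟩
        intro A B hAB _
        have hspan := span_range_basis_eq p s b
        have hXA : A ∘ₗ (e j) = B ∘ₗ (e j) := by
          ext w
          have hmem : (e j) w ∈ Submodule.span (GaloisField p s)
              (Set.range fun l => ((b l : V))) := by
            rw [hspan]; exact LinearMap.mem_range_self _ w
          have heq := LinearMap.eqOn_span (f := A) (g := B)
            (fun x hx => by obtain ⟨l, rfl⟩ := hx; exact hAB l) hmem
          simpa using heq
        have htr : LinearMap.trace (GaloisField p s) V ((e j) ∘ₗ A)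
            = LinearMap.trace (GaloisField p s) V ((e j) ∘ₗ B) := by
          rw [LinearMap.trace_comp_comm' A (e j), hXA, ← LinearMap.trace_comp_comm' B (e j)]
        simp only [uX]
        rw [htr]
    · funext A
      rw [inversion p s f A]
      exact (Fintype.sum_equiv e _ _ fun j => rfl).symm
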